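/- Let B be an n×n real symmetric positive definite matrix and let P_1, …, P_n be the associated lumped preconditioners. Then every P_i is symmetric positive definite and the chain 𝓛(B) = P_1 ⪰ P_2 ⪰ … ⪰ P_{n−1} ⪰ P_n = B holds in the Loewner order; in particular P_i ⪰ P_j ⪰ B whenever i ≤ j. -/

import Mathlib

open Matrix

/-- The Euclidean norm of a vector. -/
noncomputable def enorm {m : Type*} [Fintype m] (v : m → ℝ) : ℝ :=
  Real.sqrt (∑ i, (v i) ^ 2)

/-- The square root of a positive semidefinite real matrix, as `Matrix.PosSemidef.sqrt` was
defined in older Mathlib: `U * diagonal (√ ∘ eigenvalues) * star U`. -/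
noncomputable def posSemidefSqrt {m : Type*} [Fintype m] [DecidableEq m] {A : Matrix m m ℝ}
    (hA : A.PosSemidef) : Matrix m m ℝ :=
  (hA.1.eigenvectorUnitary : Matrix m m ℝ) * diagonal (Real.sqrt ∘ hA.1.eigenvalues) *
    star (hA.1.eigenvectorUnitary : Matrix m m ℝ)

theorem posSemidefSqrt_isHermitian {m : Type*} [Fintype m] [DecidableEq m] {A : Matrix m m ℝ}
    (hA : A.PosSemidef) : (posSemidefSqrt hA).IsHermitian := by
  show (posSemidefSqrt hA)ᴴ = posSemidefSqrt hA
  simp only [posSemidefSqrt, conjTranspose_mul, diagonal_conjTranspose, star_trivial,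
    Matrix.star_eq_conjTranspose, conjTranspose_conjTranspose, Matrix.mul_assoc]

/-- The `k`-th smallest generalized eigenvalue (counted with multiplicity) of the
symmetric pencil `(A, B)` with `B` positive definite, i.e. the `k`-th smallest root of
`det (A - λ B) = 0`.  It is defined as the `k`-th smallest eigenvalue of the Hermitian
matrix `√(B⁻¹) * A * √(B⁻¹)`, which is similar to `B⁻¹ * A`.  Junk value `0` is returned
if `A` is not symmetric or `B` is not positive definite. -/
noncomputable def genEig {m : Type*} [Fintype m] [DecidableEq m]
    (A B : Matrix m m ℝ) (k : Fin (Fintype.card m)) : ℝ :=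
  letI := Classical.propDecidable
  if h : A.IsHermitian ∧ B.PosDef then
    let S : Matrix m m ℝ := posSemidefSqrt (h.2.inv).posSemidef
    have hS : S.IsHermitian := posSemidefSqrt_isHermitian (h.2.inv).posSemidef
    have hC : (S * A * S).IsHermitian := by
      show (S * A * S)ᴴ = S * A * S
      rw [conjTranspose_mul, conjTranspose_mul, hS.eq, h.1.eq, Matrix.mul_assoc]
    let f : Fin (Fintype.card m) → ℝ := hC.eigenvalues₀
    f (Tuple.sort f k)
  else 0

/-- The `k`-th smallest generalized eigenvalue of a pencil of `n × n` matrices,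
indexed by `Fin n`.  `genEigFin A B 0` is the smallest one, `λ_1(A,B)`, and
`genEigFin A B (Fin.last _)` is the largest one, `λ_n(A,B)`. -/
noncomputable def genEigFin {n : ℕ} (A B : Matrix (Fin n) (Fin n) ℝ) (k : Fin n) : ℝ :=
  genEig A B (Fin.cast (Fintype.card_fin n).symm k)

/-- The (row-sum) lumping operator: `lump B` is the diagonal matrix whose `i`-th
diagonal entry is the sum of the absolute values of the entries of the `i`-th row of `B`. -/
noncomputable def lump {m : Type*} [Fintype m] [DecidableEq m]
    (B : Matrix m m ℝ) : Matrix m m ℝ :=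
  Matrix.diagonal fun i => ∑ j, |B i j|

/-- The banded part `D_i` of a matrix: it keeps all sub- and super-diagonals of index
smaller than `i` (i.e. the entries with `|j - k| < i`) and sets the rest to zero. -/
def diagBand {n : ℕ} (B : Matrix (Fin n) (Fin n) ℝ) (i : ℕ) : Matrix (Fin n) (Fin n) ℝ :=
  Matrix.of fun j k => if |((j : ℕ) : ℤ) - ((k : ℕ) : ℤ)| < (i : ℤ) then B j k else 0

/-- The lumped preconditioner `P_i = D_i + 𝓛(R_i)` where `B = D_i + R_i`, `D_i` being the
banded part of `B` of bandwidth `i` and `R_i` the remainder. -/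
noncomputable def precond {n : ℕ} (B : Matrix (Fin n) (Fin n) ℝ) (i : ℕ) :
    Matrix (Fin n) (Fin n) ℝ :=
  diagBand B i + lump (B - diagBand B i)



lemma diagBand_transpose {n : ℕ} {B : Matrix (Fin n) (Fin n) ℝ} (hBt : Bᵀ = B) (i : ℕ) :
    (diagBand B i)ᵀ = diagBand B i := by
  have hsym : ∀ j k, B k j = B j k := fun j k =>
    (transpose_apply B j k).symm.trans (congrFun (congrFun hBt j) k)
  ext j k
  simp only [transpose_apply, diagBand, of_apply]
  rw [abs_sub_comm, hsym j k]

lemma lump_split {n : ℕ} (B : Matrix (Fin n) (Fin n) ℝ) {i j : ℕ} (hij : i ≤ j) :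
    lump (B - diagBand B i)
      = lump (B - diagBand B j) + lump (diagBand B j - diagBand B i) := by
  unfold lump
  rw [diagonal_add]
  refine congrArg diagonal (funext fun r => ?_)
  show _ = (∑ k, |(B - diagBand B j) r k|) + ∑ k, |(diagBand B j - diagBand B i) r k|
  rw [← Finset.sum_add_distrib]
  refine Finset.sum_congr rfl fun k _ => ?_
  simp only [Matrix.sub_apply, diagBand, of_apply]
  by_cases h1 : |((r : ℕ) : ℤ) - ((k : ℕ) : ℤ)| < (i : ℤ)
  · have h2 : |((r : ℕ) : ℤ) - ((k : ℕ) : ℤ)| < (j : ℤ) :=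
      lt_of_lt_of_le h1 (by exact_mod_cast hij)
    simp [h1, h2]
  · by_cases h2 : |((r : ℕ) : ℤ) - ((k : ℕ) : ℤ)| < (j : ℤ)
    · simp [h1, h2]
    · simp [h1, h2]

lemma diagBand_top {n : ℕ} (B : Matrix (Fin (n + 1)) (Fin (n + 1)) ℝ) :
    diagBand B (n + 1) = B := by
  ext j k
  simp only [diagBand, of_apply]
  rw [if_pos]
  have hj := j.isLt
  have hk := k.isLt
  rw [abs_lt]
  constructor <;> omega

lemma lump_zero {m : Type*} [Fintype m] [DecidableEq m] :
    lump (0 : Matrix m m ℝ) = 0 := by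
  simp [lump, diagonal_zero]

lemma PosDef.diag_pos {m : Type*} [Fintype m] [DecidableEq m]
    {B : Matrix m m ℝ} (hB : B.PosDef) (j : m) : 0 < B j j := by
  exact Matrix.PosDef.diag_pos hB
lemma lump_sub_posSemidef {m : Type*} [Fintype m] [DecidableEq m]
    (E : Matrix m m ℝ) (hE : Eᵀ = E) : (lump E - E).PosSemidef := by
  have hsym : ∀ j k, E k j = E j k := fun j k =>
    (transpose_apply E j k).symm.trans (congrFun (congrFun hE j) k)
  refine Matrix.PosSemidef.of_dotProduct_mulVec_nonneg ?_ ?_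
  · show (lump E - E)ᴴ = lump E - E
    ext j k
    simp only [conjTranspose_apply, Matrix.sub_apply, lump, diagonal_apply, star_sub,
      star_trivial]
    rw [hsym j k]
    by_cases h : j = k
    · subst h; simp
    · simp [h, Ne.symm h]
  · intro x
    set S := ∑ j, ∑ k, (|E j k| * x j ^ 2 - E j k * (x j * x k)) with hSdef
    have hform : star x ⬝ᵥ (lump E - E) *ᵥ x = S := by
      simp only [star_trivial, dotProduct, mulVec, lump, Matrix.sub_apply, diagonal_apply, hSdef, Finset.mul_sum]
      refine Finset.sum_congr rfl fun j _ => ?_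
      have h1 : ∀ k, x j * (((if j = k then (∑ l, |E j l|) else 0) - E j k) * x k)
          = (if j = k then (∑ l, |E j l|) * (x j * x k) else 0) - E j k * (x j * x k) :=
        fun k => by split_ifs <;> ring
      simp only [h1, Finset.sum_sub_distrib, Finset.sum_ite_eq, Finset.mem_univ, if_true]
      congr 1
      rw [Finset.sum_mul]
      exact Finset.sum_congr rfl fun k _ => by ring
    rw [hform]
    have hS' : ∑ j, ∑ k, (|E k j| * x k ^ 2 - E k j * (x k * x j)) = S := Finset.sum_comm
    have h2 : 2 * S = ∑ j, ∑ k, ((|E j k| * x j ^ 2 - E j k * (x j * x k))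
        + (|E k j| * x k ^ 2 - E k j * (x k * x j))) := by
      rw [two_mul]
      nth_rewrite 2 [← hS']
      rw [← Finset.sum_add_distrib]
      exact Finset.sum_congr rfl fun j _ => (Finset.sum_add_distrib).symm
    have h3 : 0 ≤ 2 * S := by
      rw [h2]
      refine Finset.sum_nonneg fun j _ => Finset.sum_nonneg fun k _ => ?_
      rw [hsym j k]
      nlinarith [sq_nonneg (x j - x k), sq_nonneg (x j + x k), abs_nonneg (E j k),
        le_abs_self (E j k), neg_abs_le (E j k)]
    linarith


/-- every `P_i` is SPD and `𝓛(B) = P_1 ⪰ P_2 ⪰ … ⪰ P_n = B` in the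
Loewner order; in particular `P_i ⪰ P_j ⪰ B` whenever `i ≤ j`. -/
theorem stmt_16 {n : ℕ} (B : Matrix (Fin (n + 1)) (Fin (n + 1)) ℝ) (hB : B.PosDef) :
    (∀ i : ℕ, 1 ≤ i → i ≤ n + 1 → (precond B i).PosDef) ∧
    precond B 1 = lump B ∧
    precond B (n + 1) = B ∧
    (∀ i j : ℕ, 1 ≤ i → i ≤ j → j ≤ n + 1 → (precond B i - precond B j).PosSemidef) ∧
    (∀ i : ℕ, 1 ≤ i → i ≤ n + 1 → (precond B i - B).PosSemidef) := by
  have hBt : Bᵀ = B := by ext j k; simpa using congrFun (congrFun hB.1 j) k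
  have hRt : ∀ i : ℕ, (B - diagBand B i)ᵀ = B - diagBand B i := fun i => by
    rw [transpose_sub, hBt, diagBand_transpose hBt]
  have hEt : ∀ i j : ℕ, (diagBand B j - diagBand B i)ᵀ = diagBand B j - diagBand B i :=
    fun i j => by rw [transpose_sub, diagBand_transpose hBt, diagBand_transpose hBt]
  have hPB : ∀ i : ℕ, precond B i - B = lump (B - diagBand B i) - (B - diagBand B i) :=
    fun i => by unfold precond; abel
  have hPBpsd : ∀ i : ℕ, (precond B i - B).PosSemidef := fun i => by
    rw [hPB]; exact lump_sub_posSemidef _ (hRt i)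
  have hPij : ∀ i j : ℕ, i ≤ j → (precond B i - precond B j).PosSemidef := by
    intro i j hij
    have h : precond B i - precond B j
        = lump (diagBand B j - diagBand B i) - (diagBand B j - diagBand B i) := by
      unfold precond; rw [lump_split B hij]; abel
    rw [h]; exact lump_sub_posSemidef _ (hEt i j)
  have hPD : ∀ i : ℕ, (precond B i).PosDef := fun i => by
    have h : precond B i = B + (precond B i - B) := by abel
    rw [h]; exact hB.add_posSemidef (hPBpsd i)
  refine ⟨fun i _ _ => hPD i, ?_, ?_, fun i j _ hij _ => hPij i j hij, fun i _ _ => hPBpsd i⟩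
  · ext j k
    rcases eq_or_ne j k with rfl | h
    · have hd := PosDef.diag_pos hB j
      simp only [precond, Matrix.add_apply, diagBand, of_apply, lump, Matrix.sub_apply, diagonal_apply_eq,
        Nat.cast_one]
      have hcond : ∀ l : Fin (n + 1), (|((j : ℕ) : ℤ) - ((l : ℕ) : ℤ)| < (1 : ℤ)) ↔ j = l := by
        intro l
        rw [abs_lt]
        constructor
        · rintro ⟨a, b⟩; exact Fin.ext (by omega)
        · rintro rfl; constructor <;> omega
      have e : ∀ l, |B j l - if |((j : ℕ) : ℤ) - ((l : ℕ) : ℤ)| < (1 : ℤ) then B j l else 0|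
          = if j = l then 0 else |B j l| := by
        intro l
        rw [if_congr (hcond l) rfl rfl]
        split_ifs with h' <;> simp [h']
      simp only [e, if_congr (hcond j) rfl rfl, if_pos rfl, if_true]
      have e2 : ∑ l, (if j = l then (0:ℝ) else |B j l|)
          + ∑ l, (if j = l then |B j l| else 0) = ∑ l, |B j l| := by
        rw [← Finset.sum_add_distrib]
        exact Finset.sum_congr rfl fun l _ => by split_ifs <;> simp
      have e3 : ∑ l, (if j = l then |B j l| else 0) = |B j j| := by
        simp [Finset.sum_ite_eq]
      rw [abs_of_pos hd] at e3
      linarith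
    · have hc : ¬(|((j : ℕ) : ℤ) - ((k : ℕ) : ℤ)| < ((1:ℕ) : ℤ)) := by
        have : (j : ℕ) ≠ (k : ℕ) := fun hv => h (Fin.ext hv)
        rw [abs_lt]; omega
      simp only [precond, Matrix.add_apply, diagBand, of_apply, lump, diagonal_apply_ne _ h,
        Nat.cast_one]
      rw [if_neg (by exact_mod_cast hc), zero_add]
  · unfold precond
    rw [diagBand_top, sub_self, lump_zero, add_zero]
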